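/- arXiv:1312.3902 — 2 statements merged into one kernel-verified Lean document; each statement's English description precedes it below -/
import Mathlib

section
/- The function Ψ(τ) = τ⁴/(sinh²(τ) − τ²) is monotone decreasing on (0, +∞), and its limit as τ → 0⁺ equals 3; in particular Ψ(τ) ≤ 3 for all τ > 0. -/
open Real Filter Set Topology

/-- Ψ(τ) = τ⁴/(sinh²τ − τ²). -/
noncomputable def Psi (τ : ℝ) : ℝ := τ ^ 4 / ((Real.sinh τ) ^ 2 - τ ^ 2)

private lemma nonneg_of_hasDerivAt (G G' : ℝ → ℝ) (hd : ∀ x, HasDerivAt G (G' x) x)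
    (h0 : G 0 = 0) (hpos : ∀ x, 0 ≤ x → 0 ≤ G' x) : ∀ x, 0 ≤ x → 0 ≤ G x := by
  intro x hx
  have mono : MonotoneOn G (Set.Ici 0) := by
    apply monotoneOn_of_deriv_nonneg (convex_Ici 0)
    · exact fun y _ => (hd y).continuousAt.continuousWithinAt
    · exact fun y _ => (hd y).differentiableAt.differentiableWithinAt
    · intro y hy
      rw [interior_Ici] at hy
      rw [(hd y).deriv]
      exact hpos y hy.le
  have := mono (self_mem_Ici (a := (0:ℝ))) hx hx
  simpa [h0] using this

private lemma hasDerivAt_sinh2 (x : ℝ) :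
    HasDerivAt (fun t : ℝ => Real.sinh (2 * t)) (2 * Real.cosh (2 * x)) x := by
  have h : HasDerivAt (fun t : ℝ => 2 * t) 2 x := by
    simpa using (hasDerivAt_id x).const_mul (2:ℝ)
  have h2 : HasDerivAt (fun t : ℝ => Real.sinh (2 * t)) (Real.cosh (2 * x) * 2) x :=
    (Real.hasDerivAt_sinh (2 * x)).comp x h
  convert h2 using 1; ring

private lemma hasDerivAt_cosh2 (x : ℝ) :
    HasDerivAt (fun t : ℝ => Real.cosh (2 * t)) (2 * Real.sinh (2 * x)) x := by
  have h : HasDerivAt (fun t : ℝ => 2 * t) 2 x := by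
    simpa using (hasDerivAt_id x).const_mul (2:ℝ)
  have h2 : HasDerivAt (fun t : ℝ => Real.cosh (2 * t)) (Real.sinh (2 * x) * 2) x :=
    (Real.hasDerivAt_cosh (2 * x)).comp x h
  convert h2 using 1; ring

private lemma hasDerivAt_self (x : ℝ) : HasDerivAt (fun t : ℝ => t) 1 x := hasDerivAt_id x

private lemma ineq1 : ∀ x : ℝ, 0 ≤ x → Real.sinh x ≤ x * Real.cosh x := by
  have h := nonneg_of_hasDerivAt (fun x => x * Real.cosh x - Real.sinh x)
    (fun x => x * Real.sinh x)
    (fun x => by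
      have := ((hasDerivAt_self x).mul (Real.hasDerivAt_cosh x)).sub (Real.hasDerivAt_sinh x)
      exact this.congr_deriv (by ring))
    (by simp)
    (fun x hx => mul_nonneg hx (Real.sinh_nonneg_iff.2 hx))
  intro x hx
  have h2 := h x hx
  linarith

private lemma ineq2 : ∀ x : ℝ, 0 ≤ x →
    4 * Real.cosh (2 * x) ≤ 4 * x * Real.sinh (2 * x) + 4 := by
  have h := nonneg_of_hasDerivAt
    (fun x => 4 * x * Real.sinh (2 * x) + 4 - 4 * Real.cosh (2 * x))
    (fun x => 8 * x * Real.cosh (2 * x) - 4 * Real.sinh (2 * x))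
    (fun x => by
      have h1 := (((hasDerivAt_self x).const_mul 4).mul (hasDerivAt_sinh2 x)).add_const 4
      have h2 := (hasDerivAt_cosh2 x).const_mul 4
      have h3 := h1.sub h2
      exact h3.congr_deriv (by ring))
    (by simp)
    (fun x hx => by
      have h1 := ineq1 (2 * x) (by linarith)
      nlinarith)
  intro x hx
  have h2 := h x hx
  linarith

private lemma ineq3 : ∀ x : ℝ, 0 ≤ x →
    3 * Real.sinh (2 * x) ≤ 2 * x * Real.cosh (2 * x) + 4 * x := by
  have h := nonneg_of_hasDerivAt
    (fun x => 2 * x * Real.cosh (2 * x) + 4 * x - 3 * Real.sinh (2 * x))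
    (fun x => 4 * x * Real.sinh (2 * x) + 4 - 4 * Real.cosh (2 * x))
    (fun x => by
      have h1 := (((hasDerivAt_self x).const_mul 2).mul (hasDerivAt_cosh2 x)).add
        ((hasDerivAt_self x).const_mul 4)
      have h2 := (hasDerivAt_sinh2 x).const_mul 3
      have h3 := h1.sub h2
      exact h3.congr_deriv (by ring))
    (by simp)
    (fun x hx => by
      have h1 := ineq2 x hx
      linarith)
  intro x hx
  have h2 := h x hx
  linarith

private lemma ineq4 : ∀ x : ℝ, 0 ≤ x →
    2 * Real.cosh (2 * x) ≤ x * Real.sinh (2 * x) + 2 * x ^ 2 + 2 := by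
  have h := nonneg_of_hasDerivAt
    (fun x => x * Real.sinh (2 * x) + 2 * x ^ 2 + 2 - 2 * Real.cosh (2 * x))
    (fun x => 2 * x * Real.cosh (2 * x) + 4 * x - 3 * Real.sinh (2 * x))
    (fun x => by
      have hp : HasDerivAt (fun t : ℝ => 2 * t ^ 2) (2 * (2 * x)) x := by
        have := (hasDerivAt_pow 2 x).const_mul (2:ℝ)
        simpa using this
      have h1 := (((hasDerivAt_self x).mul (hasDerivAt_sinh2 x)).add hp).add_const 2
      have h2 := (hasDerivAt_cosh2 x).const_mul 2
      have h3 := h1.sub h2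
      exact h3.congr_deriv (by ring))
    (by simp)
    (fun x hx => by
      have h1 := ineq3 x hx
      linarith)
  intro x hx
  have h2 := h x hx
  linarith

private lemma denom_pos {τ : ℝ} (hτ : 0 < τ) : 0 < Real.sinh τ ^ 2 - τ ^ 2 := by
  have h := Real.self_lt_sinh_iff.2 hτ
  nlinarith

private lemma hasDerivAt_Psi {τ : ℝ} (hτ : 0 < τ) :
    HasDerivAt Psi
      ((4 * τ ^ 3 * (Real.sinh τ ^ 2 - τ ^ 2) -
        τ ^ 4 * (2 * Real.sinh τ * Real.cosh τ - 2 * τ)) /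
        (Real.sinh τ ^ 2 - τ ^ 2) ^ 2) τ := by
  have hnum : HasDerivAt (fun t : ℝ => t ^ 4) (4 * τ ^ 3) τ := by
    simpa using hasDerivAt_pow 4 τ
  have hden : HasDerivAt (fun t : ℝ => Real.sinh t ^ 2 - t ^ 2)
      (2 * Real.sinh τ * Real.cosh τ - 2 * τ) τ := by
    have h1 : HasDerivAt (fun t : ℝ => Real.sinh t ^ 2)
        (2 * Real.sinh τ ^ 1 * Real.cosh τ) τ := (Real.hasDerivAt_sinh τ).pow 2
    have h2 : HasDerivAt (fun t : ℝ => t ^ 2) (2 * τ) τ := by simpa using hasDerivAt_pow 2 τ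
    have h3 := h1.sub h2
    exact h3.congr_deriv (by ring)
  exact hnum.div hden (ne_of_gt (denom_pos hτ))

private lemma psi_antitone : AntitoneOn Psi (Set.Ioi 0) := by
  apply antitoneOn_of_deriv_nonpos (convex_Ioi 0)
  · exact fun τ hτ => (hasDerivAt_Psi hτ).continuousAt.continuousWithinAt
  · intro τ hτ
    rw [interior_Ioi] at hτ
    exact (hasDerivAt_Psi hτ).differentiableAt.differentiableWithinAt
  · intro τ hτ
    rw [interior_Ioi] at hτ
    rw [(hasDerivAt_Psi hτ).deriv]
    apply div_nonpos_of_nonpos_of_nonneg _ (sq_nonneg _)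
    have key := ineq4 τ hτ.le
    rw [Real.sinh_two_mul, Real.cosh_two_mul] at key
    have hc : Real.cosh τ ^ 2 = Real.sinh τ ^ 2 + 1 := Real.cosh_sq τ
    have hτ' : (0:ℝ) < τ := hτ
    have hτ3 : (0:ℝ) ≤ τ ^ 3 := by positivity
    nlinarith [mul_nonneg hτ3 (sub_nonneg.2 key)]

private lemma psi_tendsto : Tendsto Psi (nhdsWithin 0 (Set.Ioi 0)) (nhds 3) := by
  have hmem : ∀ᶠ x in 𝓝[>] (0:ℝ), x ∈ Set.Ioi (0:ℝ) := eventually_mem_nhdsWithin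
  -- Level 3 : 24τ / (4 sinh 2τ) → 3
  have L3 : Tendsto (fun τ : ℝ => (24 * τ) / (4 * Real.sinh (2 * τ))) (𝓝[>] 0) (𝓝 3) := by
    apply HasDerivAt.lhopital_zero_nhdsGT (f' := fun _ => (24:ℝ))
      (g' := fun τ => 8 * Real.cosh (2 * τ))
    · exact Eventually.of_forall fun x => by
        simpa using (hasDerivAt_self x).const_mul (24:ℝ)
    · exact Eventually.of_forall fun x => by
        have := (hasDerivAt_sinh2 x).const_mul (4:ℝ)
        exact this.congr_deriv (by ring)
    · exact Eventually.of_forall fun x => by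
        have := Real.cosh_pos (x := 2 * x)
        show 8 * Real.cosh (2 * x) ≠ 0
        positivity
    · have h : Tendsto (fun τ : ℝ => 24 * τ) (𝓝 0) (𝓝 0) := by
        simpa using (continuous_mul_left (24:ℝ)).tendsto (0:ℝ)
      exact h.mono_left nhdsWithin_le_nhds
    · have hc : Continuous fun τ : ℝ => 4 * Real.sinh (2 * τ) := by continuity
      have h := hc.tendsto (0:ℝ)
      norm_num at h
      exact h.mono_left nhdsWithin_le_nhds
    · have hc : Continuous fun τ : ℝ => (24:ℝ) / (8 * Real.cosh (2 * τ)) := by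
        apply continuous_const.div (by continuity)
        intro x
        have := Real.cosh_pos (x := 2 * x)
        positivity
      have h := hc.tendsto (0:ℝ)
      norm_num at h
      exact h.mono_left nhdsWithin_le_nhds
  -- Level 2 : 12τ² / (2 cosh 2τ − 2) → 3
  have L2 : Tendsto (fun τ : ℝ => (12 * τ ^ 2) / (2 * Real.cosh (2 * τ) - 2)) (𝓝[>] 0) (𝓝 3) := by
    apply HasDerivAt.lhopital_zero_nhdsGT (f' := fun τ => 24 * τ)
      (g' := fun τ => 4 * Real.sinh (2 * τ))
    · exact Eventually.of_forall fun x => by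
        have := (hasDerivAt_pow 2 x).const_mul (12:ℝ)
        exact this.congr_deriv (by push_cast; ring)
    · exact Eventually.of_forall fun x => by
        have := ((hasDerivAt_cosh2 x).const_mul (2:ℝ)).sub_const 2
        exact this.congr_deriv (by ring)
    · filter_upwards [hmem] with x hx
      have hs : 0 < Real.sinh (2 * x) := Real.sinh_pos_iff.2 (by have := mem_Ioi.1 hx; linarith)
      show 4 * Real.sinh (2 * x) ≠ 0
      positivity
    · have hc : Continuous fun τ : ℝ => 12 * τ ^ 2 := by continuity
      have h := hc.tendsto (0:ℝ)
      norm_num at h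
      exact h.mono_left nhdsWithin_le_nhds
    · have hc : Continuous fun τ : ℝ => 2 * Real.cosh (2 * τ) - 2 := by continuity
      have h := hc.tendsto (0:ℝ)
      norm_num at h
      exact h.mono_left nhdsWithin_le_nhds
    · exact L3
  -- Level 1 : 4τ³ / (sinh 2τ − 2τ) → 3
  have L1 : Tendsto (fun τ : ℝ => (4 * τ ^ 3) / (Real.sinh (2 * τ) - 2 * τ)) (𝓝[>] 0) (𝓝 3) := by
    apply HasDerivAt.lhopital_zero_nhdsGT (f' := fun τ => 12 * τ ^ 2)
      (g' := fun τ => 2 * Real.cosh (2 * τ) - 2)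
    · exact Eventually.of_forall fun x => by
        have := (hasDerivAt_pow 3 x).const_mul (4:ℝ)
        exact this.congr_deriv (by push_cast; ring)
    · exact Eventually.of_forall fun x => by
        have := (hasDerivAt_sinh2 x).sub ((hasDerivAt_self x).const_mul 2)
        exact this.congr_deriv (by ring)
    · filter_upwards [hmem] with x hx
      have h2x : (2 : ℝ) * x ≠ 0 := by
        have := mem_Ioi.1 hx; positivity
      have h1 : 1 < Real.cosh (2 * x) := Real.one_lt_cosh.2 h2x
      show 2 * Real.cosh (2 * x) - 2 ≠ 0
      intro h; linarith
    · have hc : Continuous fun τ : ℝ => 4 * τ ^ 3 := by continuity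
      have h := hc.tendsto (0:ℝ)
      norm_num at h
      exact h.mono_left nhdsWithin_le_nhds
    · have hc : Continuous fun τ : ℝ => Real.sinh (2 * τ) - 2 * τ := by continuity
      have h := hc.tendsto (0:ℝ)
      norm_num at h
      exact h.mono_left nhdsWithin_le_nhds
    · exact L2
  -- Level 0 : Psi → 3
  have L0 : Tendsto (fun τ : ℝ => τ ^ 4 / (Real.sinh τ ^ 2 - τ ^ 2)) (𝓝[>] 0) (𝓝 3) := by
    apply HasDerivAt.lhopital_zero_nhdsGT (f' := fun τ => 4 * τ ^ 3)
      (g' := fun τ => 2 * Real.sinh τ * Real.cosh τ - 2 * τ)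
    · exact Eventually.of_forall fun x => by simpa using hasDerivAt_pow 4 x
    · exact Eventually.of_forall fun x => by
        have h1 : HasDerivAt (fun t : ℝ => Real.sinh t ^ 2)
            (2 * Real.sinh x ^ 1 * Real.cosh x) x := (Real.hasDerivAt_sinh x).pow 2
        have h2 : HasDerivAt (fun t : ℝ => t ^ 2) (2 * x) x := by simpa using hasDerivAt_pow 2 x
        have h3 := h1.sub h2
        exact h3.congr_deriv (by ring)
    · filter_upwards [hmem] with x hx
      have hx' := mem_Ioi.1 hx
      have hs : 2 * x < Real.sinh (2 * x) := Real.self_lt_sinh_iff.2 (by linarith)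
      rw [Real.sinh_two_mul] at hs
      show 2 * Real.sinh x * Real.cosh x - 2 * x ≠ 0
      intro h; linarith
    · have hc : Continuous fun τ : ℝ => τ ^ 4 := by continuity
      have h := hc.tendsto (0:ℝ)
      norm_num at h
      exact h.mono_left nhdsWithin_le_nhds
    · have hc : Continuous fun τ : ℝ => Real.sinh τ ^ 2 - τ ^ 2 := by continuity
      have h := hc.tendsto (0:ℝ)
      norm_num at h
      exact h.mono_left nhdsWithin_le_nhds
    · have heq : (fun τ : ℝ => (4 * τ ^ 3) / (Real.sinh (2 * τ) - 2 * τ)) =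
          fun τ : ℝ => (4 * τ ^ 3) / (2 * Real.sinh τ * Real.cosh τ - 2 * τ) := by
        funext τ; rw [Real.sinh_two_mul]
      rw [heq] at L1
      exact L1
  exact L0

theorem psi_antitone_limit_le_three :
    AntitoneOn Psi (Set.Ioi 0) ∧
    Tendsto Psi (nhdsWithin 0 (Set.Ioi 0)) (nhds 3) ∧
    ∀ τ : ℝ, 0 < τ → Psi τ ≤ 3 := by
  refine ⟨psi_antitone, psi_tendsto, ?_⟩
  intro τ hτ
  have ev : ∀ᶠ s in 𝓝[>] (0:ℝ), Psi τ ≤ Psi s := by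
    filter_upwards [Ioo_mem_nhdsGT_of_mem (Set.mem_Ico.2 ⟨le_rfl, hτ⟩)] with s hs
    exact psi_antitone (mem_Ioi.2 hs.1) (mem_Ioi.2 hτ) hs.2.le
  exact ge_of_tendsto psi_tendsto ev
end

section
/- (Estimate for ‖φ_r‖ with free parameter) Suppose nonnegative reals P = ‖φ_r‖, S = ‖A_sym‖, A = ‖A‖, Q = ‖φ_θ‖ satisfy P² ≤ S² + 2AQ + 2Q² and Q² ≤ (2L²/π²)(S² + SP). Then for every sufficiently small ε ∈ (0,1), P ≤ √2((L²/ε² + 1)S + εA). Choosing ε = h^{1/4} and combining with ‖A‖² ≤ C₁(L)S(P/h + S) yields ‖A‖² ≤ C(L)h^{−3/2}S². -/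
open Real

set_option maxHeartbeats 1000000 in
/-- Estimate for ‖φ_r‖ with a free parameter ε, and the final optimization
(ε = h^{1/4}) yielding the Korn inequality for A. -/
theorem phir_estimate_and_optimization :
    ∀ L C₁ : ℝ, 0 < L → 0 < C₁ → ∃ C : ℝ, 0 < C ∧
      ∀ h P S A Q : ℝ, 0 < h → h < 1 →
        0 ≤ P → 0 ≤ S → 0 ≤ A → 0 ≤ Q →
        P^2 ≤ S^2 + 2*A*Q + 2*Q^2 →
        Q^2 ≤ (2*L^2/π^2) * (S^2 + S*P) →
        (∃ ε₀ : ℝ, 0 < ε₀ ∧ ε₀ ≤ 1 ∧ ∀ ε : ℝ, 0 < ε → ε ≤ ε₀ →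
          P ≤ Real.sqrt 2 * ((L^2/ε^2 + 1)*S + ε*A)) ∧
        (A^2 ≤ C₁ * S * (P/h + S) → A^2 ≤ C * h ^ (-(3:ℝ)/2) * S^2) := by
  intro L C₁ hL hC₁
  have hs0 : (0:ℝ) ≤ Real.sqrt 2 := Real.sqrt_nonneg 2
  have hs2 : (Real.sqrt 2)^2 = 2 := Real.sq_sqrt (by norm_num)
  refine ⟨2*C₁*Real.sqrt 2*(4*L^2+1) + C₁^2/2 + 2*C₁, ?_, ?_⟩
  · nlinarith [mul_nonneg (mul_nonneg (by linarith : (0:ℝ) ≤ 2*C₁) hs0)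
      (by positivity : (0:ℝ) ≤ 4*L^2+1), sq_nonneg C₁]
  intro h P S A Q hh0 hh1 hP hS hA hQ h1 h2
  have hπ : (3:ℝ) < π := Real.pi_gt_three
  have hπ0 : (0:ℝ) < π^2 := by positivity
  have h2' : Q^2 * π^2 ≤ 2*L^2*(S^2 + S*P) := by
    rw [div_mul_eq_mul_div, le_div_iff₀ hπ0] at h2
    linarith
  have hπ9 : (9:ℝ) < π^2 := by nlinarith
  have hQ9 : 9*Q^2 ≤ 2*L^2*(S^2 + S*P) := by
    nlinarith [mul_nonneg (by linarith : (0:ℝ) ≤ π^2 - 9) (sq_nonneg Q)]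
  -- Part 1: the estimate for every ε ≤ 1/2.
  have key : ∀ ε : ℝ, 0 < ε → ε ≤ 1/2 →
      P ≤ Real.sqrt 2 * ((L^2/ε^2 + 1)*S + ε*A) := by
    intro ε hε hεhalf
    have hε2 : ε^2 ≤ 1/4 := by nlinarith
    have h1e := mul_le_mul_of_nonneg_right h1 (sq_nonneg ε)
    have s1 : P^2*ε^2 ≤ S^2*ε^2 + ε^4*A^2 + 3*Q^2 := by
      nlinarith [h1e, sq_nonneg (ε^2*A - Q), mul_nonneg (sq_nonneg Q) (by linarith : (0:ℝ) ≤ 1/4 - ε^2)]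
    have s1e := mul_le_mul_of_nonneg_right s1 (sq_nonneg ε)
    have hQ9e := mul_le_mul_of_nonneg_right hQ9 (sq_nonneg ε)
    have hcross : (2/3)*L^2*S*P*ε^2 ≤ (1/4)*ε^4*P^2 + (4/9)*L^4*S^2 := by
      nlinarith [sq_nonneg (3*ε^2*P - 4*L^2*S)]
    have s2 : P^2*ε^4 ≤ S^2*ε^4 + ε^6*A^2 + (2/3)*L^2*S^2*ε^2 + (1/4)*ε^4*P^2 + (4/9)*L^4*S^2 := by
      nlinarith [s1e, hQ9e, hcross]
    have hcross2 : (0:ℝ) ≤ (L^2+ε^2)*(S*A*ε^3) := by positivity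
    have key2 : P^2*ε^4 ≤ 2*((L^2+ε^2)*S + ε^3*A)^2 := by
      nlinarith [s2, hcross2, sq_nonneg (L^2*S), sq_nonneg (ε^2*S),
        mul_nonneg (sq_nonneg (L*ε)) (sq_nonneg S), sq_nonneg (ε^3*A)]
    have h4 : (0:ℝ) < ε^4 := by positivity
    have hεne : ε ≠ 0 := ne_of_gt hε
    have hP2 : P^2 ≤ 2*((L^2/ε^2+1)*S + ε*A)^2 := by
      rw [← mul_le_mul_iff_of_pos_right h4]
      calc P^2*ε^4 ≤ 2*((L^2+ε^2)*S + ε^3*A)^2 := key2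
        _ = 2*((L^2/ε^2+1)*S + ε*A)^2*ε^4 := by field_simp
    have hXnn : 0 ≤ (L^2/ε^2 + 1)*S + ε*A := by positivity
    have hPs : P ≤ Real.sqrt (2*((L^2/ε^2+1)*S + ε*A)^2) := by
      have := Real.sqrt_le_sqrt hP2
      rwa [Real.sqrt_sq hP] at this
    calc P ≤ Real.sqrt (2*((L^2/ε^2+1)*S + ε*A)^2) := hPs
      _ = Real.sqrt 2 * ((L^2/ε^2+1)*S + ε*A) := by
          rw [Real.sqrt_mul (by norm_num : (0:ℝ) ≤ 2), Real.sqrt_sq hXnn]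
  refine ⟨⟨1/2, by norm_num, by norm_num, fun ε hε hε' => key ε hε hε'⟩, ?_⟩
  -- Part 2: the optimization ε = h^{1/4}/2.
  intro hA2
  set t := h ^ ((1:ℝ)/4) with htdef
  have ht0 : 0 < t := Real.rpow_pos_of_pos hh0 _
  have ht1 : t < 1 := Real.rpow_lt_one hh0.le hh1 (by norm_num)
  have ht4 : t^4 = h := by
    rw [htdef, ← Real.rpow_natCast (h ^ ((1:ℝ)/4)) 4, ← Real.rpow_mul hh0.le]
    norm_num
  have h32 : h ^ (-(3:ℝ)/2) = (t^6)⁻¹ := by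
    have e1 : h ^ (-(3:ℝ)/2) = (h ^ ((1:ℝ)/4)) ^ (-(6:ℝ)) := by
      rw [← Real.rpow_mul hh0.le]; norm_num
    rw [e1, Real.rpow_neg ht0.le, ← Real.rpow_natCast (h ^ ((1:ℝ)/4)) 6]
    norm_num
    rfl
  have ht2 : t^2 ≤ 1 := by nlinarith
  have ht6 : t^6 ≤ 1 := by nlinarith
  have Pbd := key (t/2) (by positivity) (by linarith)
  set s := Real.sqrt 2 with hsdef
  have hPbd' : P*t^2 ≤ s*((4*L^2+t^2)*S) + s*t^3*A/2 := by
    have hmul := mul_le_mul_of_nonneg_right Pbd (sq_nonneg t)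
    calc P*t^2 ≤ (s*((L^2/(t/2)^2+1)*S + (t/2)*A))*t^2 := hmul
      _ = s*((4*L^2+t^2)*S) + s*t^3*A/2 := by field_simp; ring
  have h4 : (0:ℝ) < t^4 := by positivity
  have hA2' : A^2*t^4 ≤ C₁*S*P + C₁*S^2*t^4 := by
    rw [← ht4] at hA2
    have hmul := mul_le_mul_of_nonneg_right hA2 h4.le
    calc A^2*t^4 ≤ (C₁*S*(P/t^4 + S))*t^4 := hmul
      _ = C₁*S*P + C₁*S^2*t^4 := by field_simp
  have final : A^2*t^6 ≤ (2*C₁*s*(4*L^2+1) + C₁^2/2 + 2*C₁)*S^2 := by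
    have hA2e := mul_le_mul_of_nonneg_right hA2' (sq_nonneg t)
    have hPe := mul_le_mul_of_nonneg_left hPbd' (mul_nonneg hC₁.le hS)
    have hss : C₁^2*s^2*S^2 = 2*C₁^2*S^2 := by rw [hs2]; ring
    have hcross3 : C₁*s*S*A*t^3 ≤ A^2*t^6 + C₁^2*S^2/2 := by
      nlinarith [sq_nonneg (A*t^3 - C₁*s*S/2), hss]
    have h1mt2 : (0:ℝ) ≤ 1 - t^2 := by linarith
    have h1mt6 : (0:ℝ) ≤ 1 - t^6 := by linarith
    nlinarith [hA2e, hPe, hcross3,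
      mul_nonneg (mul_nonneg hC₁.le hs0) (mul_nonneg (sq_nonneg S) h1mt2),
      mul_nonneg hC₁.le (mul_nonneg (sq_nonneg S) h1mt6)]
  have h6 : (0:ℝ) < t^6 := by positivity
  rw [h32]
  calc A^2 ≤ (2*C₁*s*(4*L^2+1) + C₁^2/2 + 2*C₁)*S^2/t^6 := (le_div_iff₀ h6).mpr final
    _ = (2*C₁*s*(4*L^2+1) + C₁^2/2 + 2*C₁)*(t^6)⁻¹*S^2 := by ring
end
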